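/- Let (A, w) be an EYM solution on (0, R) for some R > 0 with A(r) > 0 for all r ∈ (0, R) and A(r) → +∞ as r → 0⁺. Then w'(r) converges in the extended real numbers as r → 0⁺; that is, lim inf_{r → 0⁺} w'(r) = lim sup_{r → 0⁺} w'(r). -/

import Mathlib

open Filter Topology Set

/-- The quantity Φ(r) = 1 − A(r) − (1 − w(r)²)²/r² − Λ·r². -/
noncomputable def Phi (Λ : ℝ) (A w : ℝ → ℝ) (r : ℝ) : ℝ :=
  1 - A r - (1 - (w r) ^ 2) ^ 2 / r ^ 2 - Λ * r ^ 2

/-- `(A, w)` is a static spherically symmetric Einstein SU(2)-Yang–Mills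
solution with cosmological constant `Λ` on the set `I`. -/
def IsEYM (Λ : ℝ) (A w : ℝ → ℝ) (I : Set ℝ) : Prop :=
  (∀ r ∈ I, DifferentiableAt ℝ A r) ∧
  (∀ r ∈ I, DifferentiableAt ℝ w r) ∧
  (∀ r ∈ I, DifferentiableAt ℝ (deriv w) r) ∧
  (∀ r ∈ I, r * deriv A r + 2 * A r * (deriv w r) ^ 2 = Phi Λ A w r) ∧
  (∀ r ∈ I, r ^ 2 * A r * deriv (deriv w) r + r * Phi Λ A w r * deriv w r
      + w r * (1 - (w r) ^ 2) = 0)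

lemma hasDerivAt_F (Λ R : ℝ) (A w : ℝ → ℝ)
    (hEYM : IsEYM Λ A w (Ioo 0 R)) {r : ℝ} (hr : r ∈ Ioo (0:ℝ) R) :
    HasDerivAt (fun s => s * (1 - A s) - Λ * s ^ 3 / 3)
      ((1 - (w r) ^ 2) ^ 2 / r ^ 2 + 2 * A r * (deriv w r) ^ 2) r := by
  obtain ⟨hA, hw, hw', heq1, heq2⟩ := hEYM
  have h1 : HasDerivAt A (deriv A r) r := (hA r hr).hasDerivAt
  have h2 : HasDerivAt (fun s => s * (1 - A s) - Λ * s ^ 3 / 3)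
      (1 * (1 - A r) + r * (0 - deriv A r) - Λ * (3 * r ^ 2) / 3) r := by
    exact ((hasDerivAt_id r).mul ((hasDerivAt_const r 1).sub h1)).sub
      (((hasDerivAt_pow 3 r).const_mul Λ).div_const 3)
  convert h2 using 1
  have e1 := heq1 r hr
  have hrne : r ≠ 0 := ne_of_gt hr.1
  have : r * deriv A r = Phi Λ A w r - 2 * A r * (deriv w r) ^ 2 := by linarith
  rw [Phi] at this
  field_simp at this ⊢
  nlinarith [this]

lemma F_mono (Λ R : ℝ) (A w : ℝ → ℝ)
    (hEYM : IsEYM Λ A w (Ioo 0 R))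
    (hApos : ∀ r ∈ Ioo (0 : ℝ) R, 0 < A r) :
    MonotoneOn (fun s => s * (1 - A s) - Λ * s ^ 3 / 3) (Ioo 0 R) := by
  have hInt : interior (Ioo (0:ℝ) R) = Ioo 0 R := interior_Ioo
  apply monotoneOn_of_deriv_nonneg (convex_Ioo 0 R)
  · intro x hx
    exact (hasDerivAt_F Λ R A w hEYM hx).continuousAt.continuousWithinAt
  · rw [hInt]; intro x hx
    exact (hasDerivAt_F Λ R A w hEYM hx).differentiableAt.differentiableWithinAt
  · rw [hInt]; intro x hx
    rw [(hasDerivAt_F Λ R A w hEYM hx).deriv]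
    have h1 : 0 ≤ (1 - (w x) ^ 2) ^ 2 / x ^ 2 := by positivity
    nlinarith [hApos x hx, sq_nonneg (deriv w x)]

lemma w_bound (Λ R : ℝ) (A w : ℝ → ℝ)
    (hEYM : IsEYM Λ A w (Ioo 0 R))
    (hApos : ∀ r ∈ Ioo (0 : ℝ) R, 0 < A r)
    {r₀ : ℝ} (hr₀ : r₀ ∈ Ioo (0:ℝ) R)
    (hA1 : ∀ r ∈ Ioc (0:ℝ) r₀, 1 ≤ A r) :
    ∀ r ∈ Ioc (0:ℝ) r₀, w r ^ 2 ≤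
      (r₀ + 1) * ((r₀ * (1 - A r₀) - Λ * r₀ ^ 3 / 3) - (r * (1 - A r) - Λ * r ^ 3 / 3))
        + w r₀ ^ 2 + 4 := by
  set F : ℝ → ℝ := fun s => s * (1 - A s) - Λ * s ^ 3 / 3 with hF
  set K : ℝ := r₀ + 1 with hK
  have hr₀pos : 0 < r₀ := hr₀.1
  have hKpos : 0 < K := by positivity
  set M : ℝ → ℝ := fun s => w s ^ 2 + K * F s with hM
  -- subset facts
  have hsub : Ioc (0:ℝ) r₀ ⊆ Ioo 0 R := fun x hx => ⟨hx.1, lt_of_le_of_lt hx.2 hr₀.2⟩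
  -- differentiability of M on Ioo 0 R
  have hMderiv : ∀ x ∈ Ioo (0:ℝ) R, HasDerivAt M
      (2 * w x * deriv w x + K * ((1 - (w x) ^ 2) ^ 2 / x ^ 2 + 2 * A x * (deriv w x) ^ 2)) x := by
    intro x hx
    have h1 : HasDerivAt w (deriv w x) x := (hEYM.2.1 x hx).hasDerivAt
    have h2 : HasDerivAt (fun s => w s ^ 2) (2 * w x * deriv w x) x := by
      have := h1.fun_pow 2
      simpa using this
    exact h2.add ((hasDerivAt_F Λ R A w hEYM hx).const_mul K)
  -- key: where M x ≥ M r₀ + 4, deriv M x ≥ 0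
  have hkey : ∀ x ∈ Ioc (0:ℝ) r₀, M r₀ + 4 ≤ M x → 0 ≤ deriv M x := by
    intro x hx hMx
    have hxI := hsub hx
    rw [(hMderiv x hxI).deriv]
    have hw4 : 4 ≤ w x ^ 2 := by
      have hFle : F x ≤ F r₀ := F_mono Λ R A w hEYM hApos hxI hr₀ hx.2
      have e1 : M x = w x ^ 2 + K * F x := rfl
      have e2 : M r₀ = w r₀ ^ 2 + K * F r₀ := rfl
      nlinarith [sq_nonneg (w r₀), mul_nonneg (le_of_lt hKpos) (sub_nonneg.mpr hFle)]
    have hA1x : 1 ≤ A x := hA1 x hx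
    set d := deriv w x
    have h5 : w x ^ 2 / r₀ ^ 2 ≤ (1 - w x ^ 2) ^ 2 / x ^ 2 := by
      have h6 : w x ^ 2 ≤ (1 - w x ^ 2) ^ 2 := by nlinarith
      have h7 : (1 - w x ^ 2) ^ 2 / r₀ ^ 2 ≤ (1 - w x ^ 2) ^ 2 / x ^ 2 := by
        apply div_le_div_of_nonneg_left (sq_nonneg _) (pow_pos hx.1 2)
        nlinarith [hx.1, hx.2]
      calc w x ^ 2 / r₀ ^ 2 ≤ (1 - w x ^ 2) ^ 2 / r₀ ^ 2 := by
            apply div_le_div_of_nonneg_right h6 (sq_nonneg r₀)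
          _ ≤ (1 - w x ^ 2) ^ 2 / x ^ 2 := h7
    have h8 : 2 * d ^ 2 ≤ 2 * A x * d ^ 2 := by nlinarith [sq_nonneg d]
    have h9 : 0 ≤ 2 * w x * d + K * (w x ^ 2 / r₀ ^ 2 + 2 * d ^ 2) := by
      rw [div_add' _ _ _ (ne_of_gt (pow_pos hr₀pos 2))]
      rw [← sub_nonneg]
      have : 2 * w x * d + K * ((w x ^ 2 + 2 * d ^ 2 * r₀ ^ 2) / r₀ ^ 2) - 0
          = (2 * w x * d * r₀ ^ 2 + K * (w x ^ 2 + 2 * d ^ 2 * r₀ ^ 2)) / r₀ ^ 2 := by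
        field_simp
        ring
      rw [this]
      apply div_nonneg _ (by positivity)
      have hKge : r₀ ≤ K := by rw [hK]; linarith
      have h10 : r₀ ^ 2 ≤ K ^ 2 := by nlinarith
      nlinarith [sq_nonneg (2 * K * r₀ * d + r₀ * w x),
        mul_nonneg (sub_nonneg.mpr h10) (sq_nonneg (w x)), sq_nonneg (K * w x), hKpos]
    nlinarith [h5, h8, hKpos]
  -- maximum principle
  intro r hr
  by_contra hcon
  push_neg at hcon
  have hMr : M r₀ + 4 < M r := by
    have : M r = w r ^ 2 + K * F r := rfl
    simp only [hM, hF, hK] at *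
    nlinarith
  have hrr₀ : r < r₀ := by
    rcases lt_or_eq_of_le hr.2 with h | h
    · exact h
    · exfalso; rw [h] at hMr; linarith
  -- M is continuous on Icc r r₀
  have hMcont : ContinuousOn M (Icc r r₀) := by
    intro x hx
    have hxI : x ∈ Ioo (0:ℝ) R := ⟨lt_of_lt_of_le hr.1 hx.1, lt_of_le_of_lt hx.2 hr₀.2⟩
    exact (hMderiv x hxI).continuousAt.continuousWithinAt
  set Z : Set ℝ := {x ∈ Icc r r₀ | M x ≤ M r₀ + 4} with hZ
  have hZne : Z.Nonempty := ⟨r₀, ⟨le_of_lt hrr₀, le_refl _⟩, by linarith⟩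
  have hZclosed : IsClosed Z := by
    have : Z = Icc r r₀ ∩ M ⁻¹' (Iic (M r₀ + 4)) := by ext x; simp [hZ, and_comm]
    rw [this]
    exact hMcont.preimage_isClosed_of_isClosed isClosed_Icc isClosed_Iic
  have hZbdd : BddBelow Z := ⟨r, fun x hx => hx.1.1⟩
  set s := sInf Z with hs
  have hsZ : s ∈ Z := hZclosed.csInf_mem hZne hZbdd
  have hrs : r < s := by
    rcases lt_or_eq_of_le hsZ.1.1 with h | h
    · exact h
    · exfalso; rw [h] at hMr; exact absurd hsZ.2 (not_le.mpr hMr)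
  have hlt : ∀ x ∈ Ico r s, M r₀ + 4 < M x := by
    intro x hx
    by_contra hc
    push_neg at hc
    have hxZ : x ∈ Z := ⟨⟨hx.1, le_trans (le_of_lt hx.2) hsZ.1.2⟩, hc⟩
    exact absurd (csInf_le hZbdd hxZ) (not_le.mpr hx.2)
  -- M monotone on [r, s]
  have hmono : MonotoneOn M (Icc r s) := by
    apply monotoneOn_of_deriv_nonneg (convex_Icc r s)
    · exact hMcont.mono (Icc_subset_Icc le_rfl hsZ.1.2)
    · rw [interior_Icc]
      intro x hx
      have hxI : x ∈ Ioo (0:ℝ) R :=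
        ⟨lt_of_lt_of_le hr.1 (le_of_lt hx.1),
         lt_of_le_of_lt (le_trans (le_of_lt hx.2) hsZ.1.2) hr₀.2⟩
      exact (hMderiv x hxI).differentiableAt.differentiableWithinAt
    · rw [interior_Icc]
      intro x hx
      have hx' : x ∈ Ioc (0:ℝ) r₀ :=
        ⟨lt_of_lt_of_le hr.1 (le_of_lt hx.1), le_trans (le_of_lt hx.2) hsZ.1.2⟩
      exact hkey x hx' (le_of_lt (hlt x ⟨le_of_lt hx.1, hx.2⟩))
  have := hmono ⟨le_refl r, le_of_lt hrs⟩ ⟨le_of_lt hrs, le_refl s⟩ (le_of_lt hrs)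
  have h2 := hlt r ⟨le_refl r, hrs⟩
  have h3 := hsZ.2
  linarith

lemma crit_bound (Λ R : ℝ) (A w : ℝ → ℝ)
    (hEYM : IsEYM Λ A w (Ioo 0 R)) {s : ℝ} (hs : s ∈ Ioo (0:ℝ) R)
    (hcrit : deriv (deriv w) s = 0)
    (ha : 1 ≤ A s - 1 + Λ * s ^ 2) :
    4 * (A s - 1 + Λ * s ^ 2) * (deriv w s) ^ 2 ≤ w s ^ 2 := by
  have hspos : 0 < s := hs.1
  have hsne : s ≠ 0 := ne_of_gt hspos
  have e2 := hEYM.2.2.2.2 s hs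
  rw [hcrit] at e2
  set a : ℝ := A s - 1 + Λ * s ^ 2 with hadef
  set d : ℝ := deriv w s with hddef
  -- s^2 * Phi = -(s^2 * a + q)
  have hPhi : s ^ 2 * Phi Λ A w s = -(s ^ 2 * a + (1 - w s ^ 2) ^ 2) := by
    rw [Phi, hadef]
    field_simp
    ring
  -- multiply e2 by s
  have hEq : (s ^ 2 * a + (1 - w s ^ 2) ^ 2) * d = s * (w s * (1 - w s ^ 2)) := by
    have h1 : s * (s * Phi Λ A w s * d + w s * (1 - w s ^ 2)) = 0 := by
      rw [show s * Phi Λ A w s * d + w s * (1 - w s ^ 2) = 0 by linarith [e2]]; ring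
    have h2 : s ^ 2 * Phi Λ A w s * d + s * (w s * (1 - w s ^ 2)) = 0 := by ring_nf; ring_nf at h1; linarith
    rw [hPhi] at h2
    linarith
  have hsa : 0 < s ^ 2 * a := by nlinarith [pow_pos hspos 2]
  have hqnn : 0 ≤ (1 - w s ^ 2) ^ 2 := sq_nonneg _
  rcases eq_or_lt_of_le hqnn with hq0 | hqpos
  · -- q = 0 : then d = 0
    have hw1 : (1 - w s ^ 2) = 0 :=
      pow_eq_zero_iff (n := 2) (by norm_num) |>.mp hq0.symm
    rw [hw1] at hEq
    norm_num at hEq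
    have hd0 : d = 0 := by
      rcases hEq with (h | h) | h
      · exact absurd h hsne
      · exact absurd h (by intro _; nlinarith : a ≠ 0)
      · exact h
    rw [hd0]
    nlinarith [sq_nonneg (w s)]
  · -- q > 0
    have hsq : (s ^ 2 * a + (1 - w s ^ 2) ^ 2) ^ 2 * d ^ 2
        = s ^ 2 * (w s) ^ 2 * (1 - w s ^ 2) ^ 2 := by
      have h2 := congrArg (fun t => t ^ 2) hEq
      linear_combination h2
    nlinarith [sq_nonneg ((s ^ 2 * a - (1 - w s ^ 2) ^ 2) * d),
      mul_pos (pow_pos hspos 2) hqpos,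
      mul_pos (mul_pos (pow_pos hspos 2) hqpos) hqpos, sq_nonneg d, pow_pos hspos 2, hsa]

/-- if `A > 0` and `A → +∞` as `r → 0⁺`, then `w'` converges in
the extended reals as `r → 0⁺`. -/
theorem stmt_14 (Λ R : ℝ) (A w : ℝ → ℝ) (hR : 0 < R)
    (hEYM : IsEYM Λ A w (Ioo 0 R))
    (hApos : ∀ r ∈ Ioo (0 : ℝ) R, 0 < A r)
    (hAinf : Filter.Tendsto A (𝓝[>] 0) atTop) :
    Filter.liminf (fun r => ((deriv w r : ℝ) : EReal)) (𝓝[>] 0) =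
      Filter.limsup (fun r => ((deriv w r : ℝ) : EReal)) (𝓝[>] 0) := by
  by_contra hne
  set u : ℝ → EReal := fun r => ((deriv w r : ℝ) : EReal) with hu
  have hlt : liminf u (𝓝[>] (0:ℝ)) < limsup u (𝓝[>] (0:ℝ)) :=
    lt_of_le_of_ne liminf_le_limsup hne
  -- pick a real c ≠ 0 strictly between liminf and limsup
  obtain ⟨c, hcne, hc1, hc2⟩ : ∃ c : ℝ, c ≠ 0 ∧
      liminf u (𝓝[>] (0:ℝ)) < (c : EReal) ∧ (c : EReal) < limsup u (𝓝[>] (0:ℝ)) := by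
    obtain ⟨x, hx1, hx2⟩ := exists_between hlt
    obtain ⟨y, hy1, hy2⟩ := exists_between hx2
    have hxbot : x ≠ ⊥ := fun h => by rw [h] at hx1; exact not_lt_bot hx1
    have hxtop : x ≠ ⊤ := fun h => by rw [h] at hy1; exact not_top_lt hy1
    have hybot : y ≠ ⊥ := fun h => by rw [h] at hy1; exact not_lt_bot hy1
    have hytop : y ≠ ⊤ := fun h => by rw [h] at hy2; exact not_top_lt (lt_of_lt_of_le hy2 le_top)
    by_cases hx0 : x.toReal = 0
    · refine ⟨y.toReal, ?_, ?_, ?_⟩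
      · intro h0
        have : (0 : EReal) < y := by
          rw [← EReal.coe_toReal hxtop hxbot, hx0] at hy1; exact_mod_cast hy1
        rw [← EReal.coe_toReal hytop hybot, h0] at this
        exact lt_irrefl _ this
      · rw [EReal.coe_toReal hytop hybot]; exact lt_trans hx1 hy1
      · rw [EReal.coe_toReal hytop hybot]; exact hy2
    · refine ⟨x.toReal, hx0, ?_, ?_⟩
      · rw [EReal.coe_toReal hxtop hxbot]; exact hx1
      · rw [EReal.coe_toReal hxtop hxbot]; exact lt_trans hy1 hy2
  have hc2pos : 0 < c ^ 2 := by positivity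
  -- frequently above and below c
  have hfreq_above : ∀ ε > (0:ℝ), ∃ r, r ∈ Ioo (0:ℝ) ε ∧ c < deriv w r := by
    intro ε hε
    have hfreq : ∃ᶠ r in 𝓝[>] (0:ℝ), (c : EReal) < u r := by
      by_contra h
      rw [Filter.not_frequently] at h
      have hev : ∀ᶠ r in 𝓝[>] (0:ℝ), u r ≤ (c : EReal) := by
        filter_upwards [h] with r hr; exact not_lt.mp hr
      exact absurd (Filter.limsup_le_of_le (by isBoundedDefault) hev) (not_le.mpr hc2)
    have hev : ∀ᶠ r in 𝓝[>] (0:ℝ), r ∈ Ioo (0:ℝ) ε :=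
      Ioo_mem_nhdsGT hε
    obtain ⟨r, h1, h2⟩ := (hfreq.and_eventually hev).exists
    have h1' : (c : EReal) < ((deriv w r : ℝ) : EReal) := h1
    exact ⟨r, h2, by exact_mod_cast h1'⟩
  have hfreq_below : ∀ ε > (0:ℝ), ∃ r, r ∈ Ioo (0:ℝ) ε ∧ deriv w r < c := by
    intro ε hε
    have hfreq : ∃ᶠ r in 𝓝[>] (0:ℝ), u r < (c : EReal) := by
      by_contra h
      rw [Filter.not_frequently] at h
      have hev : ∀ᶠ r in 𝓝[>] (0:ℝ), (c : EReal) ≤ u r := by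
        filter_upwards [h] with r hr; exact not_lt.mp hr
      exact absurd (Filter.le_liminf_of_le (by isBoundedDefault) hev) (not_le.mpr hc1)
    have hev : ∀ᶠ r in 𝓝[>] (0:ℝ), r ∈ Ioo (0:ℝ) ε :=
      Ioo_mem_nhdsGT hε
    obtain ⟨r, h1, h2⟩ := (hfreq.and_eventually hev).exists
    have h1' : ((deriv w r : ℝ) : EReal) < (c : EReal) := h1
    exact ⟨r, h2, by exact_mod_cast h1'⟩
  -- stage 1 : r₀ with A ≥ 1 on Ioc 0 r₀, r₀ ≤ 1, r₀ < R
  obtain ⟨δ₀, hδ₀pos, hδ₀⟩ : ∃ δ₀ > (0:ℝ), ∀ r ∈ Ioo (0:ℝ) δ₀, (1:ℝ) ≤ A r := by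
    have h := hAinf.eventually (eventually_ge_atTop (1:ℝ))
    rw [Filter.eventually_iff, mem_nhdsGT_iff_exists_Ioo_subset] at h
    obtain ⟨b, hb, hsub⟩ := h
    exact ⟨b, hb, fun r hr => hsub hr⟩
  obtain ⟨r₀, hr₀def⟩ : ∃ x : ℝ, x = min (min (δ₀ / 2) (R / 2)) 1 := ⟨_, rfl⟩
  have hr₀pos : 0 < r₀ := by
    rw [hr₀def]; exact lt_min (lt_min (by linarith) (by linarith)) one_pos
  have hr₀R : r₀ < R := by
    rw [hr₀def]
    exact lt_of_le_of_lt (le_trans (min_le_left _ _) (min_le_right _ _)) (by linarith)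
  have hr₀1 : r₀ ≤ 1 := by rw [hr₀def]; exact min_le_right _ _
  have hr₀δ₀ : r₀ < δ₀ := by
    rw [hr₀def]
    exact lt_of_le_of_lt (le_trans (min_le_left _ _) (min_le_left _ _)) (by linarith)
  have hr₀mem : r₀ ∈ Ioo (0:ℝ) R := ⟨hr₀pos, hr₀R⟩
  have hA1on : ∀ r ∈ Ioc (0:ℝ) r₀, (1:ℝ) ≤ A r :=
    fun r hr => hδ₀ r ⟨hr.1, lt_of_le_of_lt hr.2 hr₀δ₀⟩
  have hwb := w_bound Λ R A w hEYM hApos hr₀mem hA1on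
  obtain ⟨K, hKdef⟩ : ∃ x : ℝ, x = r₀ + 1 := ⟨_, rfl⟩
  have hKpos : 0 < K := by rw [hKdef]; linarith
  obtain ⟨C₂, hC₂def⟩ : ∃ x : ℝ,
      x = K * ((r₀ * (1 - A r₀) - Λ * r₀ ^ 3 / 3) + |Λ| * r₀ ^ 3 / 3) + w r₀ ^ 2 + 4 := ⟨_, rfl⟩
  have hwb2 : ∀ r ∈ Ioc (0:ℝ) r₀, w r ^ 2 ≤ C₂ + K * r * A r := by
    intro r hr
    have h1 := hwb r hr
    have hr3 : r ^ 3 ≤ r₀ ^ 3 := by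
      nlinarith only [hr.1, hr.2, sq_nonneg r, sq_nonneg r₀, sq_nonneg (r + r₀)]
    have hΛr3 : Λ * r ^ 3 ≤ |Λ| * r₀ ^ 3 := by
      nlinarith only [le_abs_self Λ, abs_nonneg Λ, pow_pos hr.1 3, hr3]
    have h2 : -(r * (1 - A r) - Λ * r ^ 3 / 3) ≤ |Λ| * r₀ ^ 3 / 3 + r * A r := by
      nlinarith only [hr.1, hΛr3]
    nlinarith only [mul_le_mul_of_nonneg_left h2 (le_of_lt hKpos), h1, hC₂def, hKdef, hKpos]
  -- stage 2 : threshold on A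
  obtain ⟨Astar, hAstardef⟩ : ∃ x : ℝ, x = max (2 + 2 * |Λ|) (C₂ / c ^ 2 + 1) := ⟨_, rfl⟩
  obtain ⟨δ₁, hδ₁pos, hδ₁⟩ : ∃ δ₁ > (0:ℝ), ∀ r ∈ Ioo (0:ℝ) δ₁, Astar ≤ A r := by
    have h := hAinf.eventually (eventually_ge_atTop Astar)
    rw [Filter.eventually_iff, mem_nhdsGT_iff_exists_Ioo_subset] at h
    obtain ⟨b, hb, hsub⟩ := h
    exact ⟨b, hb, fun r hr => hsub hr⟩
  obtain ⟨δ, hδdef⟩ : ∃ x : ℝ, x = min (min δ₁ r₀) (c ^ 2 / (2 * K)) := ⟨_, rfl⟩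
  have hδpos : 0 < δ := by
    rw [hδdef]; exact lt_min (lt_min hδ₁pos hr₀pos) (div_pos hc2pos (by linarith))
  have hδr₀ : δ ≤ r₀ := by rw [hδdef]; exact le_trans (min_le_left _ _) (min_le_right _ _)
  have hδδ₁ : δ ≤ δ₁ := by rw [hδdef]; exact le_trans (min_le_left _ _) (min_le_left _ _)
  have hδK : δ ≤ c ^ 2 / (2 * K) := by rw [hδdef]; exact min_le_right _ _
  -- key: any critical point of w' in (0, δ) has (w')² < c²
  have hcritsmall : ∀ s, s ∈ Ioo (0:ℝ) δ → deriv (deriv w) s = 0 →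
      (deriv w s) ^ 2 < c ^ 2 := by
    intro s hsδ hcrit
    have hs0 : 0 < s := hsδ.1
    have hsr₀ : s ≤ r₀ := le_of_lt (lt_of_lt_of_le hsδ.2 hδr₀)
    have hsR : s ∈ Ioo (0:ℝ) R := ⟨hs0, lt_of_le_of_lt hsr₀ hr₀R⟩
    have hAs : Astar ≤ A s := hδ₁ s ⟨hs0, lt_of_lt_of_le hsδ.2 hδδ₁⟩
    have hAs1 : 2 + 2 * |Λ| ≤ A s := le_trans (hAstardef ▸ le_max_left _ _) hAs
    have hAs2 : C₂ / c ^ 2 + 1 ≤ A s := le_trans (hAstardef ▸ le_max_right _ _) hAs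
    have hs1 : s ≤ 1 := le_trans hsr₀ hr₀1
    have hs2le : s ^ 2 ≤ 1 := by nlinarith only [hs1, hs0]
    have hΛs : -|Λ| ≤ Λ * s ^ 2 := by
      nlinarith only [neg_abs_le Λ, abs_nonneg Λ, sq_nonneg s, hs2le]
    have ha : 1 ≤ A s - 1 + Λ * s ^ 2 := by
      linarith only [hAs1, hΛs, abs_nonneg Λ]
    have hcb := crit_bound Λ R A w hEYM hsR hcrit ha
    have hwbs := hwb2 s ⟨hs0, hsr₀⟩
    -- a ≥ A s / 2
    have haAs : A s / 2 ≤ A s - 1 + Λ * s ^ 2 := by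
      linarith only [hAs1, hΛs]
    have hC₂le : C₂ ≤ (A s - 1) * c ^ 2 := by
      have := (div_le_iff₀ hc2pos).mp (by linarith : C₂ / c ^ 2 ≤ A s - 1)
      linarith
    have hsK : K * s ≤ c ^ 2 / 2 := by
      have : s ≤ c ^ 2 / (2 * K) := le_trans (le_of_lt hsδ.2) hδK
      rw [le_div_iff₀ (by positivity)] at this
      linarith
    have hAspos : 0 < A s := by linarith only [hAs1, abs_nonneg Λ]
    have hKsAs : K * s * A s ≤ c ^ 2 / 2 * A s :=
      mul_le_mul_of_nonneg_right hsK (le_of_lt hAspos)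
    have hd2 : 2 * A s * (deriv w s) ^ 2 ≤ C₂ + c ^ 2 / 2 * A s := by
      nlinarith only [hcb, hwbs, hKsAs, haAs, sq_nonneg (deriv w s)]
    nlinarith only [hd2, hC₂le, hAspos, hc2pos, mul_pos hAspos hc2pos, sq_nonneg (deriv w s)]
  -- continuity of w'
  have hwcont : ∀ x ∈ Ioo (0:ℝ) R, ContinuousAt (deriv w) x :=
    fun x hx => (hEYM.2.2.1 x hx).continuousAt
  -- main case split
  rcases lt_or_gt_of_ne hcne with hcneg | hcpos
  · -- c < 0 : find interior min
    obtain ⟨r₃, hr₃, hr₃c⟩ := hfreq_above δ hδpos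
    obtain ⟨r₂, hr₂, hr₂c⟩ := hfreq_below r₃ hr₃.1
    obtain ⟨r₁, hr₁, hr₁c⟩ := hfreq_above r₂ hr₂.1
    have hord : r₁ < r₂ ∧ r₂ < r₃ := ⟨hr₁.2, hr₂.2⟩
    have hIccsub : Icc r₁ r₃ ⊆ Ioo (0:ℝ) R := fun x hx =>
      ⟨lt_of_lt_of_le hr₁.1 hx.1, lt_of_le_of_lt hx.2 (lt_of_lt_of_le (lt_of_lt_of_le hr₃.2 hδr₀) (le_of_lt hr₀R))⟩
    have hcont : ContinuousOn (deriv w) (Icc r₁ r₃) :=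
      fun x hx => (hwcont x (hIccsub hx)).continuousWithinAt
    obtain ⟨s, hsmem, hsmin⟩ := isCompact_Icc.exists_isMinOn
      (nonempty_Icc.mpr (by linarith)) hcont
    have hsval : deriv w s < c := lt_of_le_of_lt (hsmin ⟨le_of_lt hord.1, le_of_lt hord.2⟩) hr₂c
    have hsint : s ∈ Ioo r₁ r₃ := by
      rcases eq_or_lt_of_le hsmem.1 with h | h
      · exfalso; rw [← h] at hsval; linarith
      rcases eq_or_lt_of_le hsmem.2 with h | h'
      · exfalso; rw [h] at hsval; linarith
      exact ⟨h, h'⟩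
    have hcrit : deriv (deriv w) s = 0 :=
      (hsmin.isLocalMin (Icc_mem_nhds hsint.1 hsint.2)).deriv_eq_zero
    have hsδ : s ∈ Ioo (0:ℝ) δ :=
      ⟨lt_of_lt_of_le hr₁.1 hsmem.1, lt_of_le_of_lt hsmem.2 hr₃.2⟩
    have := hcritsmall s hsδ hcrit
    nlinarith only [this, hsval, hcneg]
  · -- c > 0 : find interior max
    obtain ⟨r₃, hr₃, hr₃c⟩ := hfreq_below δ hδpos
    obtain ⟨r₂, hr₂, hr₂c⟩ := hfreq_above r₃ hr₃.1
    obtain ⟨r₁, hr₁, hr₁c⟩ := hfreq_below r₂ hr₂.1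
    have hord : r₁ < r₂ ∧ r₂ < r₃ := ⟨hr₁.2, hr₂.2⟩
    have hIccsub : Icc r₁ r₃ ⊆ Ioo (0:ℝ) R := fun x hx =>
      ⟨lt_of_lt_of_le hr₁.1 hx.1, lt_of_le_of_lt hx.2 (lt_of_lt_of_le (lt_of_lt_of_le hr₃.2 hδr₀) (le_of_lt hr₀R))⟩
    have hcont : ContinuousOn (deriv w) (Icc r₁ r₃) :=
      fun x hx => (hwcont x (hIccsub hx)).continuousWithinAt
    obtain ⟨s, hsmem, hsmax⟩ := isCompact_Icc.exists_isMaxOn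
      (nonempty_Icc.mpr (by linarith)) hcont
    have hsval : c < deriv w s := lt_of_lt_of_le hr₂c (hsmax ⟨le_of_lt hord.1, le_of_lt hord.2⟩)
    have hsint : s ∈ Ioo r₁ r₃ := by
      rcases eq_or_lt_of_le hsmem.1 with h | h
      · exfalso; rw [← h] at hsval; linarith
      rcases eq_or_lt_of_le hsmem.2 with h | h'
      · exfalso; rw [h] at hsval; linarith
      exact ⟨h, h'⟩
    have hcrit : deriv (deriv w) s = 0 :=
      (hsmax.isLocalMax (Icc_mem_nhds hsint.1 hsint.2)).deriv_eq_zero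
    have hsδ : s ∈ Ioo (0:ℝ) δ :=
      ⟨lt_of_lt_of_le hr₁.1 hsmem.1, lt_of_le_of_lt hsmem.2 hr₃.2⟩
    have := hcritsmall s hsδ hcrit
    nlinarith only [this, hsval, hcpos]
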